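/- Let G be a [p, 2m, k] balanced complex orthogonal design (BCOD) in B_i form for some i ∈ {1,…,k}, with m ≥ 2. Let G' be the p×(2m−2) matrix obtained from G by deleting the m-th column and the 2m-th column. Then G' is again a BCOD (with 2(m−1) columns). -/

import Mathlib

open Matrix

/-- A formal entry of a complex orthogonal design: either `0`, or `± z_i`, or `± z_i^*`.
Here `sign = true` means sign `+1`, and `conj = true` means the conjugated symbol `z_i^*`. -/
inductive CODEntry (k : ℕ) : Type where
  | zero : CODEntry k
  | var (sign : Bool) (conj : Bool) (idx : Fin k) : CODEntry k
deriving DecidableEq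

namespace CODEntry

variable {k k' : ℕ}

/-- Evaluate a formal entry at an assignment of complex values to the indeterminates. -/
def eval (z : Fin k → ℂ) : CODEntry k → ℂ
  | zero => 0
  | var s c i => (if s then (1 : ℂ) else -1) * (if c then (starRingEnd ℂ) (z i) else z i)

/-- Formal negation of an entry. -/
def neg : CODEntry k → CODEntry k
  | zero => zero
  | var s c i => var (!s) c i

/-- Formal conjugation of an entry (with `0^* = 0`). -/
def conj : CODEntry k → CODEntry k
  | zero => zero
  | var s c i => var s (!c) i

/-- Optionally negate an entry. -/
def negIf (b : Bool) (e : CODEntry k) : CODEntry k := if b then e.neg else e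

/-- Rename variables according to a permutation of the indices. -/
def rename (σ : Equiv.Perm (Fin k)) : CODEntry k → CODEntry k
  | zero => zero
  | var s c i => var s c (σ i)

/-- Negate all instances of the variable `z_j`. -/
def negVar (j : Fin k) : CODEntry k → CODEntry k
  | zero => zero
  | var s c i => if i = j then var (!s) c i else var s c i

/-- Conjugate all instances of the variable `z_j` (swap `z_j ↔ z_j^*`). -/
def conjVar (j : Fin k) : CODEntry k → CODEntry k
  | zero => zero
  | var s c i => if i = j then var s (!c) i else var s c i

/-- Transport an entry along a map of variable index sets. -/
def mapIdx (f : Fin k → Fin k') : CODEntry k → CODEntry k'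
  | zero => zero
  | var s c i => var s c (f i)

/-- Whether a (nonzero) entry is a conjugated symbol `± z_i^*`. -/
def isConj : CODEntry k → Bool
  | zero => false
  | var _ c _ => c

/-- The index of the variable occurring in an entry, if any. -/
def index : CODEntry k → Option (Fin k)
  | zero => none
  | var _ _ i => some i

end CODEntry

/-- `G` is a `[p, n, k]` complex orthogonal design (COD): for every assignment of complex
values to the indeterminates, `Gᴴ * G = (|z_1|² + … + |z_k|²) • I_n`. -/
def IsCOD {p n k : ℕ} (G : Matrix (Fin p) (Fin n) (CODEntry k)) : Prop :=
  ∀ z : Fin k → ℂ,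
    (G.map (CODEntry.eval z))ᴴ * (G.map (CODEntry.eval z)) =
      ((∑ i, Complex.normSq (z i) : ℝ) : ℂ) • (1 : Matrix (Fin n) (Fin n) ℂ)

/-- The equivalence operations on `[p, n, k]` CODs. -/
inductive EquivOp (p n k : ℕ) : Type where
  | rowPerm (σ : Equiv.Perm (Fin p))
  | rowNeg (r : Fin p)
  | colPerm (σ : Equiv.Perm (Fin n))
  | colNeg (c : Fin n)
  | varRename (σ : Equiv.Perm (Fin k))
  | varNeg (i : Fin k)
  | varConj (i : Fin k)

namespace EquivOp

variable {p n k : ℕ}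

/-- Apply an equivalence operation to a matrix of formal entries. -/
def apply (G : Matrix (Fin p) (Fin n) (CODEntry k)) :
    EquivOp p n k → Matrix (Fin p) (Fin n) (CODEntry k)
  | rowPerm σ => fun r c => G (σ r) c
  | rowNeg r₀ => fun r c => if r = r₀ then (G r c).neg else G r c
  | colPerm σ => fun r c => G r (σ c)
  | colNeg c₀ => fun r c => if c = c₀ then (G r c).neg else G r c
  | varRename σ => fun r c => (G r c).rename σ
  | varNeg i => fun r c => (G r c).negVar i
  | varConj i => fun r c => (G r c).conjVar i

/-- The operation is a column permutation. -/
def IsColPerm : EquivOp p n k → Prop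
  | colPerm _ => True
  | _ => False

/-- The operation is a column negation. -/
def IsColNeg : EquivOp p n k → Prop
  | colNeg _ => True
  | _ => False

/-- The operation is a variable renaming. -/
def IsVarRename : EquivOp p n k → Prop
  | varRename _ => True
  | _ => False

/-- Where each row of the original matrix is sent by the operation. -/
def rowMap : EquivOp p n k → Equiv.Perm (Fin p)
  | rowPerm σ => σ⁻¹
  | _ => 1

end EquivOp

/-- Apply a finite sequence of equivalence operations, in order. -/
def applyOps {p n k : ℕ} (G : Matrix (Fin p) (Fin n) (CODEntry k))
    (ops : List (EquivOp p n k)) : Matrix (Fin p) (Fin n) (CODEntry k) :=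
  ops.foldl EquivOp.apply G

/-- Where each row of the original matrix is sent by a sequence of operations. -/
def opsRowMap {p n k : ℕ} (ops : List (EquivOp p n k)) : Equiv.Perm (Fin p) :=
  ops.foldl (fun τ op => op.rowMap * τ) 1

/-- An operation on a COD with `m + m` columns is column-restricted if, in case it is a
column permutation, it is the transposition of columns `i` and `m + i` for some `i`. -/
def EquivOp.ColumnRestricted {p m k : ℕ} : EquivOp p (m + m) k → Prop
  | .colPerm σ => ∃ i : Fin m, σ = Equiv.swap (Fin.castAdd m i) (Fin.natAdd m i)
  | _ => True

/-- `G` contains the `B_i` form submatrix on the `2m` rows selected by the embedding `f`: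
the block matrix `((z_i I_m, M), (−Mᴴ, z_i^* I_m))` where `M` is the top-right block. -/
def ContainsBFormWith {p m k : ℕ} (G : Matrix (Fin p) (Fin (m + m)) (CODEntry k))
    (i : Fin k) (f : Fin (m + m) ↪ Fin p) : Prop :=
  (∀ r s : Fin m, G (f (Fin.castAdd m r)) (Fin.castAdd m s) =
      if r = s then CODEntry.var true false i else CODEntry.zero) ∧
  (∀ r s : Fin m, G (f (Fin.natAdd m r)) (Fin.natAdd m s) =
      if r = s then CODEntry.var true true i else CODEntry.zero) ∧
  (∀ r s : Fin m, G (f (Fin.natAdd m r)) (Fin.castAdd m s) =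
      ((G (f (Fin.castAdd m s)) (Fin.natAdd m r)).conj).neg)

/-- As `ContainsBFormWith`, and moreover the top-right block `M` is (formally)
skew-symmetric: `Mᵀ = −M`. -/
def ContainsSkewBFormWith {p m k : ℕ} (G : Matrix (Fin p) (Fin (m + m)) (CODEntry k))
    (i : Fin k) (f : Fin (m + m) ↪ Fin p) : Prop :=
  ContainsBFormWith G i f ∧
  ∀ r s : Fin m, G (f (Fin.castAdd m s)) (Fin.natAdd m r) =
    (G (f (Fin.castAdd m r)) (Fin.natAdd m s)).neg

/-- `G` is in `B_i` form: after equivalence operations excluding column permutations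
(and not renaming variables), it contains the `B_i` form submatrix. -/
def InBForm {p m k : ℕ} (G : Matrix (Fin p) (Fin (m + m)) (CODEntry k)) (i : Fin k) : Prop :=
  ∃ ops : List (EquivOp p (m + m) k),
    (∀ op ∈ ops, ¬ op.IsColPerm ∧ ¬ op.IsVarRename) ∧
    ∃ f, ContainsBFormWith (applyOps G ops) i f

/-- `G` is in `B_i` form with skew-symmetric block `M_i`. -/
def InSkewBForm {p m k : ℕ} (G : Matrix (Fin p) (Fin (m + m)) (CODEntry k)) (i : Fin k) : Prop :=
  ∃ ops : List (EquivOp p (m + m) k),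
    (∀ op ∈ ops, ¬ op.IsColPerm ∧ ¬ op.IsVarRename) ∧
    ∃ f, ContainsSkewBFormWith (applyOps G ops) i f

/-- `G` is a balanced complex orthogonal design (BCOD) with `2m` columns:
a COD in which every row has exactly `m` zero entries (hence `m` nonzero ones),
every row is conjugation-separated, and for each variable `z_j` it is in `B_j` form
with skew-symmetric block `M_j`. -/
def IsBCOD {p m k : ℕ} (G : Matrix (Fin p) (Fin (m + m)) (CODEntry k)) : Prop :=
  IsCOD G ∧
  (∀ r : Fin p, (Finset.univ.filter fun c => G r c = CODEntry.zero).card = m) ∧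
  (∀ r : Fin p,
      (∀ c, G r c ≠ CODEntry.zero → (G r c).isConj = true) ∨
      (∀ c, G r c ≠ CODEntry.zero → (G r c).isConj = false)) ∧
  (∀ j : Fin k, InSkewBForm G j)

/-- `G` is the direct sum of `G₁` (on top) and `G₂` (below), where `G₁` and `G₂` use
disjoint sets of indeterminates, embedded into `Fin k` via `ι₁` and `ι₂`. -/
def IsDirectSumOf {p n k p₁ p₂ k₁ k₂ : ℕ} (hp : p = p₁ + p₂)
    (G : Matrix (Fin p) (Fin n) (CODEntry k))
    (G₁ : Matrix (Fin p₁) (Fin n) (CODEntry k₁))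
    (G₂ : Matrix (Fin p₂) (Fin n) (CODEntry k₂))
    (ι₁ : Fin k₁ ↪ Fin k) (ι₂ : Fin k₂ ↪ Fin k) : Prop :=
  k = k₁ + k₂ ∧ (∀ a b, ι₁ a ≠ ι₂ b) ∧
  ∀ (r : Fin p) (c : Fin n),
    if h : (r : ℕ) < p₁ then G r c = (G₁ ⟨(r : ℕ), h⟩ c).mapIdx (fun i => ι₁ i)
    else G r c = (G₂ ⟨(r : ℕ) - p₁, by have := r.isLt; omega⟩ c).mapIdx (fun i => ι₂ i)

/-- A COD is decomposable if, after a permutation of its rows, it can be expressed as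
the direct sum of two (nonempty) CODs on disjoint sets of indeterminates. -/
def IsDecomposable {p n k : ℕ} (G : Matrix (Fin p) (Fin n) (CODEntry k)) : Prop :=
  ∃ (σ : Equiv.Perm (Fin p)) (p₁ p₂ k₁ k₂ : ℕ) (hp : p = p₁ + p₂)
    (G₁ : Matrix (Fin p₁) (Fin n) (CODEntry k₁))
    (G₂ : Matrix (Fin p₂) (Fin n) (CODEntry k₂))
    (ι₁ : Fin k₁ ↪ Fin k) (ι₂ : Fin k₂ ↪ Fin k),
    0 < p₁ ∧ 0 < p₂ ∧ IsCOD G₁ ∧ IsCOD G₂ ∧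
    IsDirectSumOf hp (fun r c => G (σ r) c) G₁ G₂ ι₁ ι₂

/-- Rows `r₁` and `r₂` of `G` form a pair: if `r₁` is `(α₁,…,α_m, β₁,…,β_m)` then `r₂`
is `(±β₁^*,…,±β_m^*, ±α₁^*,…,±α_m^*)` (the signs may differ from entry to entry). -/
def IsPairRows {p m k : ℕ} (G : Matrix (Fin p) (Fin (m + m)) (CODEntry k))
    (r₁ r₂ : Fin p) : Prop :=
  ∀ s : Fin m,
    (∃ b : Bool, G r₂ (Fin.castAdd m s) = CODEntry.negIf b ((G r₁ (Fin.natAdd m s)).conj)) ∧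
    (∃ b : Bool, G r₂ (Fin.natAdd m s) = CODEntry.negIf b ((G r₁ (Fin.castAdd m s)).conj))

/-- Delete the `(m+1)`-st and `(2(m+1))`-th columns (1-indexed, i.e. the last column of each
half) from a matrix with `2(m+1)` columns. -/
def deleteMiddleCols {p m k : ℕ}
    (G : Matrix (Fin p) (Fin ((m + 1) + (m + 1))) (CODEntry k)) :
    Matrix (Fin p) (Fin (m + m)) (CODEntry k) :=
  fun r c =>
    G r (if h : (c : ℕ) < m then ⟨(c : ℕ), by omega⟩
         else ⟨(c : ℕ) + 1, by have := c.isLt; omega⟩)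

section Aux

open CODEntry Finset

variable {p n k m : ℕ}

/-! ### Basic entry lemmas -/

lemma CODEntry.index_eq_none_iff (e : CODEntry k) : e.index = none ↔ e = .zero := by
  cases e <;> simp [CODEntry.index]

lemma CODEntry.index_neg (e : CODEntry k) : e.neg.index = e.index := by
  cases e <;> rfl

lemma CODEntry.index_negVar (j : Fin k) (e : CODEntry k) : (e.negVar j).index = e.index := by
  cases e with
  | zero => rfl
  | var s c i => dsimp [CODEntry.negVar]; split <;> rfl

lemma CODEntry.index_conjVar (j : Fin k) (e : CODEntry k) : (e.conjVar j).index = e.index := by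
  cases e with
  | zero => rfl
  | var s c i => dsimp [CODEntry.conjVar]; split <;> rfl

lemma CODEntry.eq_neg_iff (e : CODEntry k) : e = e.neg ↔ e = .zero := by
  cases e with
  | zero => simp [CODEntry.neg]
  | var s c i => cases s <;> simp [CODEntry.neg]

lemma CODEntry.eval_neg (z : Fin k → ℂ) (e : CODEntry k) : e.neg.eval z = - e.eval z := by
  cases e with
  | zero => simp [CODEntry.neg, CODEntry.eval]
  | var s c i => cases s <;> cases c <;> simp [CODEntry.neg, CODEntry.eval]

lemma CODEntry.eval_negVar (j : Fin k) (z : Fin k → ℂ) (e : CODEntry k) :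
    (e.negVar j).eval z = e.eval (Function.update z j (-(z j))) := by
  cases e with
  | zero => rfl
  | var s c i =>
    rcases eq_or_ne i j with h | h
    · subst h
      simp [CODEntry.negVar, CODEntry.eval, Function.update_self]
      cases s <;> cases c <;> simp [map_neg] <;> ring
    · simp [CODEntry.negVar, h, CODEntry.eval, Function.update_of_ne h]

lemma CODEntry.eval_conjVar (j : Fin k) (z : Fin k → ℂ) (e : CODEntry k) :
    (e.conjVar j).eval z = e.eval (Function.update z j ((starRingEnd ℂ) (z j))) := by
  cases e with
  | zero => rfl
  | var s c i =>
    rcases eq_or_ne i j with h | h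
    · subst h
      simp [CODEntry.conjVar, CODEntry.eval, Function.update_self]
      cases c <;> simp
    · simp [CODEntry.conjVar, h, CODEntry.eval, Function.update_of_ne h]

lemma CODEntry.eval_rename (σ : Equiv.Perm (Fin k)) (z : Fin k → ℂ) (e : CODEntry k) :
    (e.rename σ).eval z = e.eval (fun i => z (σ i)) := by
  cases e <;> rfl

/-! ### COD entrywise characterization -/

lemma isCOD_iff (G : Matrix (Fin p) (Fin n) (CODEntry k)) :
    IsCOD G ↔ ∀ (z : Fin k → ℂ) (c d : Fin n),
      ∑ r, (starRingEnd ℂ) ((G r c).eval z) * (G r d).eval z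
        = if c = d then ((∑ i, Complex.normSq (z i) : ℝ) : ℂ) else 0 := by
  constructor
  · intro h z c d
    have := congrFun (congrFun (h z) c) d
    simpa [Matrix.mul_apply, Matrix.conjTranspose_apply, Matrix.one_apply,
      Matrix.smul_apply, smul_eq_mul, mul_ite, mul_one, mul_zero, Matrix.map_apply] using this
  · intro h z
    ext c d
    simpa [Matrix.mul_apply, Matrix.conjTranspose_apply, Matrix.one_apply,
      Matrix.smul_apply, smul_eq_mul, mul_ite, mul_one, mul_zero, Matrix.map_apply] using h z c d

lemma sum_normSq_update_neg (z : Fin k → ℂ) (j : Fin k) :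
    ∑ i, Complex.normSq (Function.update z j (-(z j)) i) = ∑ i, Complex.normSq (z i) := by
  apply Finset.sum_congr rfl
  intro i _
  rcases eq_or_ne i j with h | h
  · subst h; simp
  · simp [Function.update_of_ne h]

lemma sum_normSq_update_conj (z : Fin k → ℂ) (j : Fin k) :
    ∑ i, Complex.normSq (Function.update z j ((starRingEnd ℂ) (z j)) i)
      = ∑ i, Complex.normSq (z i) := by
  apply Finset.sum_congr rfl
  intro i _
  rcases eq_or_ne i j with h | h
  · subst h; simp [Complex.normSq_conj]
  · simp [Function.update_of_ne h]

lemma isCOD_apply {G : Matrix (Fin p) (Fin n) (CODEntry k)} (h : IsCOD G)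
    (op : EquivOp p n k) : IsCOD (op.apply G) := by
  rw [isCOD_iff] at h ⊢
  intro z c d
  cases op with
  | rowPerm σ =>
    dsimp [EquivOp.apply]
    rw [← h z c d]
    exact Fintype.sum_equiv σ _ _ (fun r => rfl)
  | rowNeg r₀ =>
    dsimp [EquivOp.apply]
    rw [← h z c d]
    apply Finset.sum_congr rfl
    intro r _
    by_cases hr : r = r₀ <;> simp [hr, CODEntry.eval_neg]
  | colPerm σ =>
    dsimp [EquivOp.apply]
    rw [h z (σ c) (σ d)]
    simp [σ.injective.eq_iff]
  | colNeg c₀ =>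
    dsimp [EquivOp.apply]
    have key : ∀ r : Fin p,
        (starRingEnd ℂ) ((if c = c₀ then (G r c).neg else G r c).eval z) *
          (if d = c₀ then (G r d).neg else G r d).eval z
        = (if c = c₀ then (-1 : ℂ) else 1) * ((if d = c₀ then (-1 : ℂ) else 1) *
            ((starRingEnd ℂ) ((G r c).eval z) * (G r d).eval z)) := by
      intro r
      by_cases hc : c = c₀ <;> by_cases hd : d = c₀ <;> simp [hc, hd, CODEntry.eval_neg] <;> ring
    simp only [key]
    simp only [← Finset.mul_sum]
    rw [h z c d]
    by_cases hcd : c = d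
    · subst hcd; by_cases hc : c = c₀ <;> simp [hc]
    · simp [hcd]
  | varRename σ =>
    dsimp [EquivOp.apply]
    simp only [CODEntry.eval_rename]
    rw [h (fun i => z (σ i)) c d]
    congr 1
    norm_cast
    exact Equiv.sum_comp σ (fun i => Complex.normSq (z i))
  | varNeg j =>
    dsimp [EquivOp.apply]
    simp only [CODEntry.eval_negVar]
    rw [h (Function.update z j (-(z j))) c d, sum_normSq_update_neg]
  | varConj j =>
    dsimp [EquivOp.apply]
    simp only [CODEntry.eval_conjVar]
    rw [h (Function.update z j ((starRingEnd ℂ) (z j))) c d, sum_normSq_update_conj]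

lemma isCOD_applyOps {G : Matrix (Fin p) (Fin n) (CODEntry k)} (h : IsCOD G)
    (ops : List (EquivOp p n k)) : IsCOD (applyOps G ops) := by
  induction ops generalizing G with
  | nil => exact h
  | cons op ops ih => exact ih (isCOD_apply h op)

/-! ### Index correspondence under ops -/

lemma apply_index (op : EquivOp p n k) (h1 : ¬ op.IsColPerm) (h2 : ¬ op.IsVarRename)
    (G : Matrix (Fin p) (Fin n) (CODEntry k)) :
    ∃ σ : Equiv.Perm (Fin p), ∀ r c, ((op.apply G) r c).index = (G (σ r) c).index := by
  cases op with
  | rowPerm σ => exact ⟨σ, fun r c => rfl⟩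
  | rowNeg r₀ =>
    refine ⟨1, fun r c => ?_⟩
    dsimp [EquivOp.apply]
    split <;> simp [CODEntry.index_neg]
  | colPerm σ => exact absurd trivial h1
  | colNeg c₀ =>
    refine ⟨1, fun r c => ?_⟩
    dsimp [EquivOp.apply]
    split <;> simp [CODEntry.index_neg]
  | varRename σ => exact absurd trivial h2
  | varNeg j => exact ⟨1, fun r c => CODEntry.index_negVar j _⟩
  | varConj j => exact ⟨1, fun r c => CODEntry.index_conjVar j _⟩

lemma applyOps_index (ops : List (EquivOp p n k))
    (hops : ∀ op ∈ ops, ¬ op.IsColPerm ∧ ¬ op.IsVarRename)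
    (G : Matrix (Fin p) (Fin n) (CODEntry k)) :
    ∃ τ : Equiv.Perm (Fin p), ∀ r c, ((applyOps G ops) r c).index = (G (τ r) c).index := by
  induction ops generalizing G with
  | nil => exact ⟨1, fun r c => rfl⟩
  | cons op ops ih =>
    obtain ⟨τ, hτ⟩ := ih (fun o ho => hops o (List.mem_cons_of_mem _ ho)) (op.apply G)
    obtain ⟨σ, hσ⟩ := apply_index op (hops op (List.mem_cons_self)).1
      (hops op (List.mem_cons_self)).2 G
    exact ⟨τ.trans σ, fun r c => (hτ r c).trans (hσ (τ r) c)⟩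

/-! ### Unique variable occurrence per column -/

lemma exists_unique_var {H : Matrix (Fin p) (Fin n) (CODEntry k)} (h : IsCOD H)
    (j : Fin k) (c : Fin n) : ∃! r : Fin p, (H r c).index = some j := by
  classical
  set z : Fin k → ℂ := fun l => if l = j then 1 else 0 with hz
  have hsum := (isCOD_iff H).1 h z c c
  rw [if_pos rfl] at hsum
  have hS : (∑ i, Complex.normSq (z i) : ℝ) = 1 := by
    rw [hz]
    simp only
    rw [Finset.sum_eq_single j]
    · simp
    · intro b _ hb; simp [hb]
    · simp
  rw [hS] at hsum
  have hterm : ∀ e : CODEntry k,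
      (starRingEnd ℂ) (e.eval z) * e.eval z = if e.index = some j then 1 else 0 := by
    intro e
    cases e with
    | zero => simp [CODEntry.eval, CODEntry.index]
    | var s cc i =>
      rcases eq_or_ne i j with h' | h'
      · subst h'; cases s <;> cases cc <;> simp [CODEntry.eval, CODEntry.index, hz]
      · cases s <;> cases cc <;> simp [CODEntry.eval, CODEntry.index, hz, h']
  simp only [hterm] at hsum
  rw [Finset.sum_boole] at hsum
  have hcard : (Finset.univ.filter fun r => (H r c).index = some j).card = 1 := by
    exact_mod_cast hsum
  obtain ⟨a, ha⟩ := Finset.card_eq_one.1 hcard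
  refine ⟨a, ?_, ?_⟩
  · have : a ∈ Finset.univ.filter fun r => (H r c).index = some j := ha ▸ Finset.mem_singleton_self a
    exact (Finset.mem_filter.1 this).2
  · intro b hb
    have : b ∈ Finset.univ.filter fun r => (H r c).index = some j :=
      Finset.mem_filter.2 ⟨Finset.mem_univ b, hb⟩
    rw [ha, Finset.mem_singleton] at this
    exact this

end Aux
section Aux2

open CODEntry Finset

variable {p n k : ℕ}

lemma fin_natAdd_injective (M : ℕ) : Function.Injective (Fin.natAdd M : Fin M → Fin (M + M)) := by
  intro a b h
  have := congrArg Fin.val h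
  simp only [Fin.coe_natAdd] at this
  exact Fin.ext (by omega)

/-! ### The zero pattern of rows of a BCOD -/

lemma bcod_row_pattern {M : ℕ} (G : Matrix (Fin p) (Fin (M + M)) (CODEntry k))
    (hG : IsBCOD G) (r : Fin p) (t : Fin M) :
    (G r (Fin.castAdd M t) = CODEntry.zero ↔ ¬ G r (Fin.natAdd M t) = CODEntry.zero) := by
  classical
  have hMpos : 0 < M := t.pos
  -- find a nonzero entry in row r
  have hzcard := hG.2.1 r
  have hex : ∃ c0, G r c0 ≠ CODEntry.zero := by
    by_contra hall
    push_neg at hall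
    have : (Finset.univ.filter fun c => G r c = CODEntry.zero) = Finset.univ :=
      Finset.filter_true_of_mem (fun c _ => hall c)
    rw [this] at hzcard
    simp [Finset.card_univ] at hzcard
    omega
  obtain ⟨c0, hc0⟩ := hex
  obtain ⟨j, hj⟩ : ∃ j, (G r c0).index = some j := by
    cases he : G r c0 with
    | zero => exact absurd he hc0
    | var s c i => exact ⟨i, by simp [he, CODEntry.index]⟩
  obtain ⟨ops, hops, f, hBF, hskew⟩ := hG.2.2.2 j
  set H := applyOps G ops with hH
  obtain ⟨τ, hτ⟩ := applyOps_index ops hops G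
  have hHcod : IsCOD H := isCOD_applyOps hG.1 ops
  set r' := τ.symm r with hr'def
  have hidx : ∀ c, (H r' c).index = (G r c).index := by
    intro c; rw [hτ]; simp [hr'def]
  have hzero : ∀ c, (H r' c = CODEntry.zero ↔ G r c = CODEntry.zero) := by
    intro c
    rw [← CODEntry.index_eq_none_iff, ← CODEntry.index_eq_none_iff, hidx]
  -- the zero set of row r' of H
  set Z := Finset.univ.filter (fun c => H r' c = CODEntry.zero) with hZ
  have hZcard : Z.card = M := by
    rw [hZ, show (Finset.univ.filter fun c => H r' c = CODEntry.zero)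
        = Finset.univ.filter fun c => G r c = CODEntry.zero from
      Finset.filter_congr (fun c _ => by rw [hzero])]
    exact hzcard
  have hmemZ : ∀ c, c ∈ Z ↔ H r' c = CODEntry.zero := by
    intro c; rw [hZ]; simp
  have hr'j : (H r' c0).index = some j := by rw [hidx]; exact hj
  have diag_zero : ∀ s : Fin M, H (f (Fin.castAdd M s)) (Fin.natAdd M s) = CODEntry.zero :=
    fun s => (CODEntry.eq_neg_iff _).1 (hskew s s)
  obtain ⟨a, -, huniq⟩ := exists_unique_var hHcod j c0
  rcases lt_or_ge (c0 : ℕ) M with hlt | hge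
  · -- c0 = castAdd s0 : r' is a "top" row
    set s0 : Fin M := ⟨(c0 : ℕ), hlt⟩ with hs0
    have hc0eq : c0 = Fin.castAdd M s0 := by apply Fin.ext; rfl
    have hdiagidx : (H (f (Fin.castAdd M s0)) c0).index = some j := by
      rw [hc0eq, hBF.1 s0 s0, if_pos rfl]; rfl
    have hr'eq : r' = f (Fin.castAdd M s0) := by
      rw [huniq r' hr'j, huniq (f (Fin.castAdd M s0)) hdiagidx]
    have hfirst : ∀ u : Fin M, H r' (Fin.castAdd M u)
        = if s0 = u then CODEntry.var true false j else CODEntry.zero := by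
      intro u; rw [hr'eq]; exact hBF.1 s0 u
    set S : Finset (Fin (M + M)) :=
      insert (Fin.natAdd M s0) ((Finset.univ.erase s0).image (Fin.castAdd M)) with hS
    have hnotmem : Fin.natAdd M s0 ∉ (Finset.univ.erase s0).image (Fin.castAdd M) := by
      simp only [Finset.mem_image]
      rintro ⟨u, -, hu⟩
      have := congrArg Fin.val hu
      simp only [Fin.coe_castAdd, Fin.coe_natAdd] at this
      omega
    have hScard : S.card = M := by
      rw [hS, Finset.card_insert_of_notMem hnotmem,
        Finset.card_image_of_injective _ (Fin.castAdd_injective M M),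
        Finset.card_erase_of_mem (Finset.mem_univ s0)]
      simp only [Finset.card_univ, Fintype.card_fin]
      omega
    have hSsubZ : S ⊆ Z := by
      intro x hx
      rw [hS, Finset.mem_insert, Finset.mem_image] at hx
      rw [hmemZ]
      rcases hx with hx | ⟨u, hu, hx⟩
      · rw [hx, hr'eq]; exact diag_zero s0
      · rw [← hx, hfirst u, if_neg]
        exact fun h => (Finset.mem_erase.1 hu).1 h.symm
    have hSZ : S = Z := Finset.eq_of_subset_of_card_le hSsubZ (le_of_eq (hZcard.trans hScard.symm))
    have hcastZ : ∀ u : Fin M, (Fin.castAdd M u ∈ Z ↔ u ≠ s0) := by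
      intro u
      rw [← hSZ, hS, Finset.mem_insert, Finset.mem_image]
      constructor
      · rintro (h | ⟨v, hv, h⟩)
        · exfalso
          have := congrArg Fin.val h
          simp only [Fin.coe_castAdd, Fin.coe_natAdd] at this
          omega
        · rw [← Fin.castAdd_injective M M h]
          exact (Finset.mem_erase.1 hv).1
      · intro h
        exact Or.inr ⟨u, Finset.mem_erase.2 ⟨h, Finset.mem_univ u⟩, rfl⟩
    have hnatZ : ∀ u : Fin M, (Fin.natAdd M u ∈ Z ↔ u = s0) := by
      intro u
      rw [← hSZ, hS, Finset.mem_insert, Finset.mem_image]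
      constructor
      · rintro (h | ⟨v, hv, h⟩)
        · exact fin_natAdd_injective M h
        · exfalso
          have := congrArg Fin.val h
          simp only [Fin.coe_castAdd, Fin.coe_natAdd] at this
          omega
      · intro h; exact Or.inl (by rw [h])
    rw [← hzero, ← hzero, ← hmemZ, ← hmemZ, hcastZ t, hnatZ t]
  · -- c0 = natAdd s0 : r' is a "bottom" row
    set s0 : Fin M := ⟨(c0 : ℕ) - M, by have := c0.isLt; omega⟩ with hs0
    have hc0eq : c0 = Fin.natAdd M s0 := by apply Fin.ext; simp [hs0]; omega
    have hdiagidx : (H (f (Fin.natAdd M s0)) c0).index = some j := by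
      rw [hc0eq, hBF.2.1 s0 s0, if_pos rfl]; rfl
    have hr'eq : r' = f (Fin.natAdd M s0) := by
      rw [huniq r' hr'j, huniq (f (Fin.natAdd M s0)) hdiagidx]
    have hsecond : ∀ u : Fin M, H r' (Fin.natAdd M u)
        = if s0 = u then CODEntry.var true true j else CODEntry.zero := by
      intro u; rw [hr'eq]; exact hBF.2.1 s0 u
    have hfirst : ∀ u : Fin M, H r' (Fin.castAdd M u)
        = ((H (f (Fin.castAdd M u)) (Fin.natAdd M s0)).conj).neg := by
      intro u; rw [hr'eq]; exact hBF.2.2 s0 u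
    set S : Finset (Fin (M + M)) :=
      insert (Fin.castAdd M s0) ((Finset.univ.erase s0).image (Fin.natAdd M)) with hS
    have hnotmem : Fin.castAdd M s0 ∉ (Finset.univ.erase s0).image (Fin.natAdd M) := by
      simp only [Finset.mem_image]
      rintro ⟨u, -, hu⟩
      have := congrArg Fin.val hu
      simp only [Fin.coe_castAdd, Fin.coe_natAdd] at this
      omega
    have hScard : S.card = M := by
      rw [hS, Finset.card_insert_of_notMem hnotmem,
        Finset.card_image_of_injective _ (fin_natAdd_injective M),
        Finset.card_erase_of_mem (Finset.mem_univ s0)]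
      simp only [Finset.card_univ, Fintype.card_fin]
      omega
    have hSsubZ : S ⊆ Z := by
      intro x hx
      rw [hS, Finset.mem_insert, Finset.mem_image] at hx
      rw [hmemZ]
      rcases hx with hx | ⟨u, hu, hx⟩
      · rw [hx, hfirst s0, diag_zero s0]; rfl
      · rw [← hx, hsecond u, if_neg]
        exact fun h => (Finset.mem_erase.1 hu).1 h.symm
    have hSZ : S = Z := Finset.eq_of_subset_of_card_le hSsubZ (le_of_eq (hZcard.trans hScard.symm))
    have hcastZ : ∀ u : Fin M, (Fin.castAdd M u ∈ Z ↔ u = s0) := by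
      intro u
      rw [← hSZ, hS, Finset.mem_insert, Finset.mem_image]
      constructor
      · rintro (h | ⟨v, hv, h⟩)
        · exact Fin.castAdd_injective M M h
        · exfalso
          have := congrArg Fin.val h
          simp only [Fin.coe_castAdd, Fin.coe_natAdd] at this
          omega
      · intro h; exact Or.inl (by rw [h])
    have hnatZ : ∀ u : Fin M, (Fin.natAdd M u ∈ Z ↔ u ≠ s0) := by
      intro u
      rw [← hSZ, hS, Finset.mem_insert, Finset.mem_image]
      constructor
      · rintro (h | ⟨v, hv, h⟩)
        · exfalso
          have := congrArg Fin.val h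
          simp only [Fin.coe_castAdd, Fin.coe_natAdd] at this
          omega
        · rw [← fin_natAdd_injective M h]
          exact (Finset.mem_erase.1 hv).1
      · intro h
        exact Or.inr ⟨u, Finset.mem_erase.2 ⟨h, Finset.mem_univ u⟩, rfl⟩
    rw [← hzero, ← hzero, ← hmemZ, ← hmemZ, hcastZ t, hnatZ t]
    tauto

end Aux2
section Aux3

open CODEntry Finset

variable {p n k m : ℕ}

/-- The embedding of the small column set into the large one (skipping `m` and `2m+1`). -/
def embCol (m : ℕ) (c : Fin (m + m)) : Fin ((m + 1) + (m + 1)) :=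
  if h : (c : ℕ) < m then ⟨(c : ℕ), by omega⟩
  else ⟨(c : ℕ) + 1, by have := c.isLt; omega⟩

lemma embCol_val (c : Fin (m + m)) :
    ((embCol m c : Fin ((m+1)+(m+1))) : ℕ) = if (c : ℕ) < m then (c : ℕ) else (c : ℕ) + 1 := by
  unfold embCol; split <;> simp_all

lemma embCol_injective : Function.Injective (embCol m) := by
  intro a b h
  have := congrArg Fin.val h
  rw [embCol_val, embCol_val] at this
  apply Fin.ext
  split_ifs at this <;> omega

lemma deleteMiddleCols_apply (G : Matrix (Fin p) (Fin ((m+1)+(m+1))) (CODEntry k))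
    (r : Fin p) (c : Fin (m + m)) : deleteMiddleCols G r c = G r (embCol m c) := rfl

lemma embCol_castAdd (t : Fin m) :
    embCol m (Fin.castAdd m t) = Fin.castAdd (m + 1) t.castSucc := by
  apply Fin.ext
  rw [embCol_val]
  simp [t.isLt]

lemma embCol_natAdd (t : Fin m) :
    embCol m (Fin.natAdd m t) = Fin.natAdd (m + 1) t.castSucc := by
  apply Fin.ext
  rw [embCol_val]
  simp only [Fin.coe_natAdd, Fin.coe_castSucc]
  split_ifs <;> omega

/-- Translate an equivalence operation to the matrix with deleted columns. -/
def shrinkOp : EquivOp p ((m + 1) + (m + 1)) k → Option (EquivOp p (m + m) k)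
  | .rowPerm σ => some (.rowPerm σ)
  | .rowNeg r => some (.rowNeg r)
  | .colPerm _ => none
  | .colNeg c =>
      if h : (c : ℕ) < m then some (.colNeg ⟨(c : ℕ), by omega⟩)
      else if h2 : m + 1 ≤ (c : ℕ) ∧ (c : ℕ) < 2 * m + 1 then
        some (.colNeg ⟨(c : ℕ) - 1, by omega⟩)
      else none
  | .varRename σ => some (.varRename σ)
  | .varNeg i => some (.varNeg i)
  | .varConj i => some (.varConj i)

lemma shrink_commute (G : Matrix (Fin p) (Fin ((m+1)+(m+1))) (CODEntry k))
    (op : EquivOp p ((m+1)+(m+1)) k) (hop : ¬ op.IsColPerm) :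
    deleteMiddleCols (op.apply G)
      = (shrinkOp op).elim (deleteMiddleCols G) (fun op' => op'.apply (deleteMiddleCols G)) := by
  cases op with
  | rowPerm σ => rfl
  | rowNeg r₀ => rfl
  | colPerm σ => exact absurd trivial hop
  | colNeg c₀ =>
    funext r c
    by_cases h : (c₀ : ℕ) < m
    · have hiff : embCol m c = c₀ ↔ c = ⟨(c₀ : ℕ), by omega⟩ := by
        constructor
        · intro he
          have := congrArg Fin.val he
          rw [embCol_val] at this
          apply Fin.ext
          simp only
          split_ifs at this <;> omega
        · intro he
          subst he
          apply Fin.ext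
          rw [embCol_val]
          simp [h]
      simp only [shrinkOp, dif_pos h, Option.elim, EquivOp.apply, deleteMiddleCols_apply]
      change (if embCol m c = c₀ then (G r (embCol m c)).neg else G r (embCol m c)) = _
      by_cases hc : embCol m c = c₀
      · rw [if_pos hc, if_pos (hiff.1 hc)]
      · rw [if_neg hc, if_neg (fun hh => hc (hiff.2 hh))]
    · by_cases h2 : m + 1 ≤ (c₀ : ℕ) ∧ (c₀ : ℕ) < 2 * m + 1
      · have hiff : embCol m c = c₀ ↔ c = ⟨(c₀ : ℕ) - 1, by omega⟩ := by
          constructor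
          · intro he
            have := congrArg Fin.val he
            rw [embCol_val] at this
            apply Fin.ext
            simp only
            split_ifs at this <;> omega
          · intro he
            subst he
            apply Fin.ext
            rw [embCol_val]
            simp only
            split_ifs <;> omega
        simp only [shrinkOp, dif_neg h, dif_pos h2, Option.elim, EquivOp.apply,
          deleteMiddleCols_apply]
        change (if embCol m c = c₀ then (G r (embCol m c)).neg else G r (embCol m c)) = _
        by_cases hc : embCol m c = c₀
        · rw [if_pos hc, if_pos (hiff.1 hc)]
        · rw [if_neg hc, if_neg (fun hh => hc (hiff.2 hh))]
      · have hne : embCol m c ≠ c₀ := by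
          intro he
          have := congrArg Fin.val he
          rw [embCol_val] at this
          have hlt := c₀.isLt
          have hlt2 := c.isLt
          split_ifs at this <;> omega
        simp only [shrinkOp, dif_neg h, dif_neg h2, Option.elim, EquivOp.apply,
          deleteMiddleCols_apply]
        change (if embCol m c = c₀ then (G r (embCol m c)).neg else G r (embCol m c)) = _
        rw [if_neg hne]
  | varRename σ => rfl
  | varNeg i => rfl
  | varConj i => rfl

lemma shrink_applyOps (ops : List (EquivOp p ((m+1)+(m+1)) k))
    (hops : ∀ op ∈ ops, ¬ op.IsColPerm)
    (G : Matrix (Fin p) (Fin ((m+1)+(m+1))) (CODEntry k)) :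
    applyOps (deleteMiddleCols G) (ops.filterMap shrinkOp)
      = deleteMiddleCols (applyOps G ops) := by
  induction ops generalizing G with
  | nil => rfl
  | cons op ops ih =>
    have hc := shrink_commute G op (hops op (List.mem_cons_self))
    have htail : ∀ op' ∈ ops, ¬ op'.IsColPerm := fun o ho => hops o (List.mem_cons_of_mem _ ho)
    cases hs : shrinkOp op with
    | none =>
      rw [hs] at hc
      simp only [Option.elim] at hc
      rw [List.filterMap_cons_none hs,
        show applyOps G (op :: ops) = applyOps (op.apply G) ops from rfl,
        ← ih htail (op.apply G), hc]
    | some op' =>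
      rw [hs] at hc
      simp only [Option.elim] at hc
      rw [List.filterMap_cons_some hs,
        show applyOps G (op :: ops) = applyOps (op.apply G) ops from rfl,
        ← ih htail (op.apply G), hc]
      rfl

end Aux3
section Aux4

open CODEntry Finset

variable {p n k m : ℕ}

lemma containsSkew_delete {H : Matrix (Fin p) (Fin ((m+1)+(m+1))) (CODEntry k)} {j : Fin k}
    {f : Fin ((m+1)+(m+1)) ↪ Fin p} (h : ContainsSkewBFormWith H j f) :
    ContainsSkewBFormWith (deleteMiddleCols H) j
      ⟨fun c => f (embCol m c), f.injective.comp embCol_injective⟩ := by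
  obtain ⟨⟨h1, h2, h3⟩, h4⟩ := h
  refine ⟨⟨fun r s => ?_, fun r s => ?_, fun r s => ?_⟩, fun r s => ?_⟩
  · show H (f (embCol m (Fin.castAdd m r))) (embCol m (Fin.castAdd m s)) = _
    rw [embCol_castAdd, embCol_castAdd, h1 r.castSucc s.castSucc]
    simp [Fin.castSucc_inj]
  · show H (f (embCol m (Fin.natAdd m r))) (embCol m (Fin.natAdd m s)) = _
    rw [embCol_natAdd, embCol_natAdd, h2 r.castSucc s.castSucc]
    simp [Fin.castSucc_inj]
  · show H (f (embCol m (Fin.natAdd m r))) (embCol m (Fin.castAdd m s))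
      = ((H (f (embCol m (Fin.castAdd m s))) (embCol m (Fin.natAdd m r))).conj).neg
    rw [embCol_natAdd, embCol_castAdd]
    exact h3 r.castSucc s.castSucc
  · show H (f (embCol m (Fin.castAdd m s))) (embCol m (Fin.natAdd m r))
      = (H (f (embCol m (Fin.castAdd m r))) (embCol m (Fin.natAdd m s))).neg
    rw [embCol_castAdd, embCol_natAdd, embCol_castAdd, embCol_natAdd]
    exact h4 r.castSucc s.castSucc

lemma inSkewBForm_delete (G : Matrix (Fin p) (Fin ((m+1)+(m+1))) (CODEntry k)) (j : Fin k)
    (h : InSkewBForm G j) : InSkewBForm (deleteMiddleCols G) j := by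
  obtain ⟨ops, hops, f, hC⟩ := h
  refine ⟨ops.filterMap shrinkOp, ?_, ?_⟩
  · intro op' hmem
    rw [List.mem_filterMap] at hmem
    obtain ⟨op, hop, heq⟩ := hmem
    have hprops := hops op hop
    cases op with
    | rowPerm σ => injection heq with heq; subst heq; exact ⟨fun h => h, fun h => h⟩
    | rowNeg r₀ => injection heq with heq; subst heq; exact ⟨fun h => h, fun h => h⟩
    | colPerm σ => exact absurd trivial hprops.1
    | colNeg c₀ =>
      simp only [shrinkOp] at heq
      split_ifs at heq
      · injection heq with heq; subst heq; exact ⟨fun h => h, fun h => h⟩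
      · injection heq with heq; subst heq; exact ⟨fun h => h, fun h => h⟩
    | varRename σ => exact absurd trivial hprops.2
    | varNeg i => injection heq with heq; subst heq; exact ⟨fun h => h, fun h => h⟩
    | varConj i => injection heq with heq; subst heq; exact ⟨fun h => h, fun h => h⟩
  · rw [shrink_applyOps ops (fun o ho => (hops o ho).1) G]
    exact ⟨_, containsSkew_delete hC⟩

end Aux4
/-- deleting the `m`-th and `2m`-th columns of a `[p, 2m, k]` BCOD in
`B_i` form (here with `2m = 2(m+1)`, so `m ≥ 2`) yields again a BCOD, with `2(m-1)` columns. -/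
theorem bcod_delete_columns {p m k : ℕ} (hm : 1 ≤ m)
    (G : Matrix (Fin p) (Fin ((m + 1) + (m + 1))) (CODEntry k))
    (hG : IsBCOD G) (i : Fin k) (hi : InBForm G i) :
    IsBCOD (deleteMiddleCols G) := by
  classical
  obtain ⟨hcod, hbal, hsep, hforms⟩ := hG
  refine ⟨?_, ?_, ?_, fun j => inSkewBForm_delete G j (hforms j)⟩
  · -- COD property
    rw [isCOD_iff]
    intro z c d
    have h := (isCOD_iff G).1 hcod z (embCol m c) (embCol m d)
    simp only [deleteMiddleCols_apply]
    rw [h]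
    rcases eq_or_ne c d with rfl | hcd
    · rw [if_pos rfl, if_pos rfl]
    · rw [if_neg (fun hh => hcd (embCol_injective hh)), if_neg hcd]
  · -- balance
    intro r
    have hpat := bcod_row_pattern G ⟨hcod, hbal, hsep, hforms⟩ r (Fin.last m)
    set colA : Fin ((m+1)+(m+1)) := Fin.castAdd (m+1) (Fin.last m) with hcolA
    set colB : Fin ((m+1)+(m+1)) := Fin.natAdd (m+1) (Fin.last m) with hcolB
    have hAval : (colA : ℕ) = m := rfl
    have hBval : (colB : ℕ) = 2 * m + 1 := by simp [hcolB]; omega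
    simp only [deleteMiddleCols_apply]
    have h1 : (Finset.univ.filter fun c : Fin (m+m) => G r (embCol m c) = CODEntry.zero).card
        = ((Finset.univ.image (embCol m)).filter fun c => G r c = CODEntry.zero).card := by
      rw [Finset.filter_image, Finset.card_image_of_injective _ embCol_injective]
    have h2 : (Finset.univ : Finset (Fin (m+m))).image (embCol m)
        = ((Finset.univ.erase colA).erase colB) := by
      ext x
      simp only [Finset.mem_image, Finset.mem_erase, Finset.mem_univ, and_true]
      constructor
      · rintro ⟨c, -, rfl⟩
        have hv := embCol_val c
        have hlt := c.isLt
        constructor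
        · intro hx; rw [hx] at hv; rw [hBval] at hv; split_ifs at hv <;> omega
        · intro hx; rw [hx] at hv; rw [hAval] at hv; split_ifs at hv <;> omega
      · rintro ⟨hxB, hxA⟩
        have hne1 : (x : ℕ) ≠ m := fun hh => hxA (Fin.ext (by rw [hAval, hh]))
        have hne2 : (x : ℕ) ≠ 2 * m + 1 := fun hh => hxB (Fin.ext (by rw [hBval, hh]))
        have hlt := x.isLt
        rcases lt_or_ge (x : ℕ) m with h | h
        · exact ⟨⟨(x : ℕ), by omega⟩, by trivial, by
            apply Fin.ext; rw [embCol_val]; simp [h]⟩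
        · exact ⟨⟨(x : ℕ) - 1, by omega⟩, by trivial, by
            apply Fin.ext; rw [embCol_val]; simp only; split_ifs <;> omega⟩
    refine h1.trans ?_
    rw [h2, Finset.filter_erase, Finset.filter_erase]
    by_cases hA : G r colA = CODEntry.zero
    · have hB : ¬ G r colB = CODEntry.zero := hpat.1 hA
      have hnot : colB ∉ ((Finset.univ.filter fun c => G r c = CODEntry.zero).erase colA) :=
        fun hmem => hB (Finset.mem_filter.1 (Finset.mem_of_mem_erase hmem)).2
      have hmemA : colA ∈ Finset.univ.filter (fun c => G r c = CODEntry.zero) :=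
        Finset.mem_filter.2 ⟨Finset.mem_univ _, hA⟩
      rw [Finset.erase_eq_of_notMem hnot, Finset.card_erase_of_mem hmemA, hbal r]
      omega
    · have hB : G r colB = CODEntry.zero := by
        by_contra hB; exact hA (hpat.2 hB)
      have hnotA : colA ∉ (Finset.univ.filter fun c => G r c = CODEntry.zero) :=
        fun hmem => hA (Finset.mem_filter.1 hmem).2
      have hmemB : colB ∈ Finset.univ.filter (fun c => G r c = CODEntry.zero) :=
        Finset.mem_filter.2 ⟨Finset.mem_univ _, hB⟩
      rw [Finset.erase_eq_of_notMem hnotA, Finset.card_erase_of_mem hmemB, hbal r]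
      omega
  · -- conjugation separation
    intro r
    rcases hsep r with h | h
    · exact Or.inl fun c hc => h (embCol m c) hc
    · exact Or.inr fun c hc => h (embCol m c) hc
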